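/- Let p be an odd prime and χ a non-principal Dirichlet character mod p. Then ∑_{m=0}^{p-1} |∑_{a=1}^{p-1} χ(m·a + ā)·e(a/p)|² = p·(p - 2 - χ̄(-1)). -/

import Mathlib

open Finset Complex

noncomputable def e (p : ℕ) [NeZero p] (x : ZMod p) : ℂ :=
  Complex.exp (2 * Real.pi * Complex.I * x.val / p)

lemma e_eq (p : ℕ) [NeZero p] (x : ZMod p) : e p x = ZMod.stdAddChar x := by
  conv_rhs => rw [← ZMod.natCast_zmod_val x]
  rw [ZMod.stdAddChar_apply, ZMod.toCircle_natCast]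
  unfold e
  norm_num

lemma conj_std (p : ℕ) [NeZero p] (x : ZMod p) :
    (starRingEnd ℂ) (ZMod.stdAddChar x) = ZMod.stdAddChar (-x) := by
  have h1 : ZMod.stdAddChar x * ZMod.stdAddChar (-x) = 1 := by
    rw [← AddChar.map_add_eq_mul, add_neg_cancel, AddChar.map_zero_eq_one]
  have h2 : ‖(ZMod.stdAddChar x : ℂ)‖ = 1 := by
    rw [ZMod.stdAddChar_apply]; exact Circle.norm_coe _
  rw [← Complex.inv_eq_conj h2]
  exact inv_eq_of_mul_eq_one_right h1

lemma sum_std (p : ℕ) [NeZero p] (d : ZMod p) :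
    ∑ x : ZMod p, ZMod.stdAddChar (x * d) = if d = 0 then (p : ℂ) else 0 := by
  split_ifs with h
  · simp [h, ZMod.card]
  · have h2 := AddChar.sum_eq_zero_of_ne_one (ZMod.isPrimitive_stdAddChar p h)
    simpa [AddChar.mulShift_apply, mul_comm] using h2

lemma sum_std_ne (p : ℕ) [NeZero p] (d : ZMod p) :
    ∑ x ∈ univ.filter (fun x : ZMod p => x ≠ 0), ZMod.stdAddChar (x * d)
      = (if d = 0 then (p : ℂ) else 0) - 1 := by
  rw [Finset.filter_ne', Finset.sum_erase_eq_sub (mem_univ 0), sum_std]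
  simp

lemma chi_mul_conj {p : ℕ} [Fact p.Prime] (χ : DirichletCharacter ℂ p) {u : ZMod p}
    (hu : u ≠ 0) : χ u * (starRingEnd ℂ) (χ u) = 1 := by
  have h : IsUnit u := hu.isUnit
  have hn : ‖χ u‖ = 1 := by simpa using χ.unit_norm_eq_one h.unit
  rw [Complex.mul_conj]
  rw [Complex.normSq_eq_norm_sq]
  norm_cast
  rw [hn, one_pow]

lemma L1 {p : ℕ} [Fact p.Prime] (χ : DirichletCharacter ℂ p) (hχ : χ ≠ 1)
    {α : ZMod p} (hα : α ≠ 0) (β : ZMod p) :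
    ∑ u : ZMod p, χ u * (starRingEnd ℂ) (χ (α * u + β))
      = (if β = 0 then (p : ℂ) * (starRingEnd ℂ) (χ α) else 0) - (starRingEnd ℂ) (χ α) := by
  have step1 : ∀ u : ZMod p, χ u * (starRingEnd ℂ) (χ (α * u + β))
      = if u = 0 then 0 else (starRingEnd ℂ) (χ (α + β * u⁻¹)) := by
    intro u
    by_cases hu : u = 0
    · simp [hu, MulChar.map_zero χ]
    · rw [if_neg hu]
      have h : α * u + β = u * (α + β * u⁻¹) := by field_simp
      rw [h, map_mul, map_mul, ← mul_assoc, chi_mul_conj χ hu, one_mul]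
  simp_rw [step1]
  have step2 : ∑ u : ZMod p, (if u = 0 then (0:ℂ) else (starRingEnd ℂ) (χ (α + β * u⁻¹)))
      = ∑ v : ZMod p, (if v = 0 then (0:ℂ) else (starRingEnd ℂ) (χ (α + β * v))) := by
    rw [← Equiv.sum_comp (Equiv.inv (ZMod p))
      (fun v => if v = 0 then (0:ℂ) else (starRingEnd ℂ) (χ (α + β * v)))]
    refine Finset.sum_congr rfl fun u _ => ?_
    simp [Equiv.inv_apply, inv_eq_zero]
  rw [step2]
  have step3 : ∀ v : ZMod p, (if v = 0 then (0:ℂ) else (starRingEnd ℂ) (χ (α + β * v)))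
      = (starRingEnd ℂ) (χ (α + β * v)) - (if v = 0 then (starRingEnd ℂ) (χ (α + β * v)) else 0) := by
    intro v; split_ifs <;> simp
  simp_rw [step3]
  rw [Finset.sum_sub_distrib, Finset.sum_ite_eq' univ (0 : ZMod p)]
  simp only [mem_univ, if_true, mul_zero, add_zero]
  congr 1
  by_cases hβ : β = 0
  · simp [hβ, Finset.card_univ, ZMod.card, mul_comm]
  · rw [if_neg hβ]
    have h0 : ∑ v : ZMod p, χ (α + β * v) = 0 := by
      calc ∑ v : ZMod p, χ (α + β * v)
          = ∑ v : ZMod p, χ (((Equiv.mulLeft₀ β hβ).trans (Equiv.addLeft α)) v) := by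
            refine Finset.sum_congr rfl fun v _ => ?_
            simp [Equiv.trans_apply, Equiv.mulLeft₀_apply, Equiv.coe_addLeft]
        _ = ∑ w : ZMod p, χ w := Equiv.sum_comp _ _
        _ = 0 := MulChar.sum_eq_zero_of_ne_one hχ
    rw [← map_sum, h0, map_zero]

lemma LA {p : ℕ} [Fact p.Prime] (χ : DirichletCharacter ℂ p) (hχ : χ ≠ 1)
    {a b : ZMod p} (ha : a ≠ 0) (hb : b ≠ 0) :
    ∑ m : ZMod p, χ (m * a + a⁻¹) * (starRingEnd ℂ) (χ (m * b + b⁻¹))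
      = (if b = a ∨ b = -a then (p : ℂ) * (starRingEnd ℂ) (χ (a⁻¹ * b)) else 0)
        - (starRingEnd ℂ) (χ (a⁻¹ * b)) := by
  have hab : a⁻¹ * b ≠ 0 := mul_ne_zero (inv_ne_zero ha) hb
  have reindex : ∑ m : ZMod p, χ (m * a + a⁻¹) * (starRingEnd ℂ) (χ (m * b + b⁻¹))
      = ∑ u : ZMod p, χ u * (starRingEnd ℂ) (χ ((a⁻¹ * b) * u + (b⁻¹ - a⁻¹ * a⁻¹ * b))) := by
    rw [← Equiv.sum_comp ((Equiv.mulRight₀ a ha).trans (Equiv.addRight a⁻¹))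
      (fun u => χ u * (starRingEnd ℂ) (χ ((a⁻¹ * b) * u + (b⁻¹ - a⁻¹ * a⁻¹ * b))))]
    refine Finset.sum_congr rfl fun m _ => ?_
    simp only [Equiv.trans_apply, Equiv.mulRight₀_apply, Equiv.coe_addRight]
    have harg : (a⁻¹ * b) * (m * a + a⁻¹) + (b⁻¹ - a⁻¹ * a⁻¹ * b) = m * b + b⁻¹ := by
      field_simp
      ring
    rw [harg]
  rw [reindex, L1 χ hχ hab]
  have hiff : (b⁻¹ - a⁻¹ * a⁻¹ * b = 0) ↔ (b = a ∨ b = -a) := by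
    constructor
    · intro h
      have h3 : a * a = b * b := by
        field_simp at h
        linear_combination h
      have h2 : (b - a) * (b + a) = 0 := by linear_combination -h3
      rcases mul_eq_zero.mp h2 with h4 | h4
      · exact Or.inl (sub_eq_zero.mp h4)
      · exact Or.inr (eq_neg_of_add_eq_zero_left h4)
    · rintro (rfl | rfl)
      · field_simp
        ring
      · field_simp
        ring
  simp_rw [hiff]

theorem stmt_3 (p : ℕ) [Fact p.Prime] (hp : Odd p) (χ : DirichletCharacter ℂ p)
    (hχ : χ ≠ 1) :
    ∑ m : ZMod p,
      ‖∑ a ∈ univ.filter (fun a : ZMod p => a ≠ 0),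
        χ (m * a + a⁻¹) * e p a‖ ^ 2
      = p * (p - 2 - (starRingEnd ℂ) (χ (-1))) := by
  classical
  have hprime : p.Prime := Fact.out
  have h2 : (2 : ZMod p) ≠ 0 := by
    intro h
    have h' : (p : ℕ) ∣ 2 := by
      have : ((2 : ℕ) : ZMod p) = 0 := by exact_mod_cast h
      exact (ZMod.natCast_eq_zero_iff 2 p).mp this
    have heq := (Nat.prime_dvd_prime_iff_eq hprime Nat.prime_two).mp h'
    rw [heq] at hp
    exact absurd hp (by decide)
  set A : Finset (ZMod p) := univ.filter (fun a : ZMod p => a ≠ 0) with hA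
  have hmemA : ∀ {x : ZMod p}, x ∈ A ↔ x ≠ 0 := by
    intro x; simp [hA]
  have habs : ∀ z : ℂ, (↑‖z‖ : ℂ)^2 = z * (starRingEnd ℂ) z := by
    intro z
    rw [Complex.mul_conj, Complex.normSq_eq_norm_sq]
    norm_cast
  -- T1 computation
  have hT1 : ∑ a ∈ A, ∑ b ∈ A,
      (starRingEnd ℂ) (χ (a⁻¹ * b)) * (ZMod.stdAddChar a * (starRingEnd ℂ) (ZMod.stdAddChar b))
      = (p : ℂ) := by
    have hinner : ∀ a ∈ A, ∑ b ∈ A,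
        (starRingEnd ℂ) (χ (a⁻¹ * b)) * (ZMod.stdAddChar a * (starRingEnd ℂ) (ZMod.stdAddChar b))
        = ∑ c : ZMod p, (starRingEnd ℂ) (χ c) * ZMod.stdAddChar (a * (1 - c)) := by
      intro a haA
      have ha : a ≠ 0 := hmemA.mp haA
      rw [hA, Finset.filter_ne', Finset.sum_erase _ (by simp [MulChar.map_zero])]
      rw [← Equiv.sum_comp (Equiv.mulLeft₀ a ha)
        (fun b => (starRingEnd ℂ) (χ (a⁻¹ * b)) * (ZMod.stdAddChar a * (starRingEnd ℂ) (ZMod.stdAddChar b)))]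
      refine Finset.sum_congr rfl fun c _ => ?_
      simp only [Equiv.mulLeft₀_apply]
      rw [← mul_assoc a⁻¹, inv_mul_cancel₀ ha, one_mul, conj_std, ← AddChar.map_add_eq_mul]
      congr 2
      ring
    rw [Finset.sum_congr rfl hinner, Finset.sum_comm]
    have hinner2 : ∀ c : ZMod p,
        ∑ a ∈ A, (starRingEnd ℂ) (χ c) * ZMod.stdAddChar (a * (1 - c))
        = (if c = 1 then (starRingEnd ℂ) (χ c) * (p : ℂ) else 0) - (starRingEnd ℂ) (χ c) := by
      intro c
      rw [← Finset.mul_sum, hA, sum_std_ne]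
      by_cases hc : c = 1
      · rw [if_pos (by rw [hc]; ring), if_pos hc]
        ring
      · rw [if_neg (fun hh => hc (by linear_combination -hh)), if_neg hc]
        ring
    rw [Finset.sum_congr rfl (fun c _ => hinner2 c), Finset.sum_sub_distrib,
      Finset.sum_ite_eq' univ (1 : ZMod p)]
    have hsum0 : ∑ c : ZMod p, (starRingEnd ℂ) (χ c) = 0 := by
      rw [← map_sum, MulChar.sum_eq_zero_of_ne_one hχ, map_zero]
    rw [hsum0]
    simp
  -- T2 computation
  have hT2 : ∑ a ∈ A, ∑ b ∈ A,
      (if b = a ∨ b = -a then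
        (p : ℂ) * (starRingEnd ℂ) (χ (a⁻¹ * b)) * (ZMod.stdAddChar a * (starRingEnd ℂ) (ZMod.stdAddChar b))
       else 0)
      = ((p : ℂ) - 1) * p - p * (starRingEnd ℂ) (χ (-1)) := by
    have hinner : ∀ a ∈ A, ∑ b ∈ A,
        (if b = a ∨ b = -a then
          (p : ℂ) * (starRingEnd ℂ) (χ (a⁻¹ * b)) * (ZMod.stdAddChar a * (starRingEnd ℂ) (ZMod.stdAddChar b))
         else 0)
        = (p : ℂ) + (p : ℂ) * (starRingEnd ℂ) (χ (-1)) * ZMod.stdAddChar (a * 2) := by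
      intro a haA
      have ha : a ≠ 0 := hmemA.mp haA
      have hne : a ≠ -a := by
        intro hh
        have : a * 2 = 0 := by linear_combination hh
        rcases mul_eq_zero.mp this with h' | h'
        · exact ha h'
        · exact h2 h'
      have hsplit : ∀ b : ZMod p,
          (if b = a ∨ b = -a then
            (p : ℂ) * (starRingEnd ℂ) (χ (a⁻¹ * b)) * (ZMod.stdAddChar a * (starRingEnd ℂ) (ZMod.stdAddChar b))
           else 0)
          = (if b = a then
              (p : ℂ) * (starRingEnd ℂ) (χ (a⁻¹ * b)) * (ZMod.stdAddChar a * (starRingEnd ℂ) (ZMod.stdAddChar b))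
             else 0)
          + (if b = -a then
              (p : ℂ) * (starRingEnd ℂ) (χ (a⁻¹ * b)) * (ZMod.stdAddChar a * (starRingEnd ℂ) (ZMod.stdAddChar b))
             else 0) := by
        intro b
        by_cases hb1 : b = a
        · subst hb1
          rw [if_pos (Or.inl rfl), if_pos rfl, if_neg (fun hh => hne hh), add_zero]
        · by_cases hb2 : b = -a
          · subst hb2
            rw [if_pos (Or.inr rfl), if_neg hb1, if_pos rfl, zero_add]
          · rw [if_neg (by tauto), if_neg hb1, if_neg hb2, add_zero]
      rw [Finset.sum_congr rfl (fun b _ => hsplit b), Finset.sum_add_distrib,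
        Finset.sum_ite_eq' A a, Finset.sum_ite_eq' A (-a),
        if_pos haA, if_pos (hmemA.mpr (neg_ne_zero.mpr ha))]
      have e1 : (p : ℂ) * (starRingEnd ℂ) (χ (a⁻¹ * a)) * (ZMod.stdAddChar a * (starRingEnd ℂ) (ZMod.stdAddChar a)) = (p : ℂ) := by
        rw [inv_mul_cancel₀ ha, map_one, map_one, conj_std, ← AddChar.map_add_eq_mul,
          add_neg_cancel, AddChar.map_zero_eq_one]
        ring
      have e2 : (p : ℂ) * (starRingEnd ℂ) (χ (a⁻¹ * -a)) * (ZMod.stdAddChar a * (starRingEnd ℂ) (ZMod.stdAddChar (-a)))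
          = (p : ℂ) * (starRingEnd ℂ) (χ (-1)) * ZMod.stdAddChar (a * 2) := by
        rw [conj_std, neg_neg, ← AddChar.map_add_eq_mul, mul_neg, inv_mul_cancel₀ ha]
        congr 2
        ring
      rw [e1, e2]
    have hcard : (univ.filter (fun a : ZMod p => a ≠ 0)).card = p - 1 := by
      rw [Finset.filter_ne', Finset.card_erase_of_mem (mem_univ 0), Finset.card_univ, ZMod.card]
    rw [Finset.sum_congr rfl hinner, Finset.sum_add_distrib, Finset.sum_const, ← Finset.mul_sum,
      hA, sum_std_ne, if_neg h2, hcard, nsmul_eq_mul, Nat.cast_sub hprime.one_lt.le]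
    push_cast
    ring
  -- main chain
  push_cast
  calc ∑ m : ZMod p, (↑‖∑ a ∈ A, χ (m * a + a⁻¹) * e p a‖ : ℂ) ^ 2
      = ∑ m : ZMod p, ∑ a ∈ A, ∑ b ∈ A,
          (χ (m * a + a⁻¹) * (starRingEnd ℂ) (χ (m * b + b⁻¹)))
            * (ZMod.stdAddChar a * (starRingEnd ℂ) (ZMod.stdAddChar b)) := by
        refine Finset.sum_congr rfl fun m _ => ?_
        rw [habs, map_sum, Finset.sum_mul_sum]
        refine Finset.sum_congr rfl fun a _ => Finset.sum_congr rfl fun b _ => ?_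
        simp only [map_mul, e_eq]
        ring
    _ = ∑ a ∈ A, ∑ b ∈ A, (∑ m : ZMod p, χ (m * a + a⁻¹) * (starRingEnd ℂ) (χ (m * b + b⁻¹)))
          * (ZMod.stdAddChar a * (starRingEnd ℂ) (ZMod.stdAddChar b)) := by
        rw [Finset.sum_comm]
        refine Finset.sum_congr rfl fun a _ => ?_
        rw [Finset.sum_comm]
        refine Finset.sum_congr rfl fun b _ => ?_
        rw [Finset.sum_mul]
    _ = ∑ a ∈ A, ∑ b ∈ A,
          ((if b = a ∨ b = -a then
            (p : ℂ) * (starRingEnd ℂ) (χ (a⁻¹ * b)) * (ZMod.stdAddChar a * (starRingEnd ℂ) (ZMod.stdAddChar b))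
           else 0)
          - (starRingEnd ℂ) (χ (a⁻¹ * b)) * (ZMod.stdAddChar a * (starRingEnd ℂ) (ZMod.stdAddChar b))) := by
        refine Finset.sum_congr rfl fun a haA => Finset.sum_congr rfl fun b hbB => ?_
        rw [LA χ hχ (hmemA.mp haA) (hmemA.mp hbB), sub_mul, ite_mul, zero_mul]
    _ = (((p : ℂ) - 1) * p - p * (starRingEnd ℂ) (χ (-1))) - p := by
        simp_rw [Finset.sum_sub_distrib]
        rw [hT1, hT2]
    _ = p * (p - 2 - (starRingEnd ℂ) (χ (-1))) := by ring
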